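/- Let N ≥ 1 and k ≥ 1 be integers, let 1 ≤ ℓ ≤ k, let c_1, …, c_k be real numbers with c_a > 0 for all a and c_1 + ⋯ + c_k < 1, and let i_1, …, i_ℓ ∈ {1, …, N}. Define w_j = (N − j) + Σ_{a=1}^{ℓ−1} c_a·𝟙[i_a = j] for j ∈ {1, …, N}. Then for every j ≠ i_ℓ both c_ℓ + w_{i_ℓ} − w_j ≠ 0 and w_{i_ℓ} − w_j ≠ 0, and ∏_{j ∈ {1,…,N}, j ≠ i_ℓ} (c_ℓ + w_{i_ℓ} − w_j)/(w_{i_ℓ} − w_j) > 0. -/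

import Mathlib

open Finset

/-- The evaluation point obtained from `ρ_N = (N-1, N-2, …, 1, 0)` (indexed by `j ∈ {1,…,N}`,
so coordinate `j` equals `N - j`) by shifting coordinate `i a` by `c a` for each
`a = 1, …, ℓ-1`; shifts at a repeated coordinate accumulate. -/
def wvec (N ℓ : ℕ) (c : ℕ → ℝ) (i : ℕ → ℕ) (j : ℕ) : ℝ :=
  ((N : ℝ) - (j : ℝ)) + ∑ a ∈ Finset.Ico 1 ℓ, c a * (if i a = j then 1 else 0)

theorem stmt15 (N k ℓ : ℕ) (hN : 1 ≤ N) (hk : 1 ≤ k) (hℓ1 : 1 ≤ ℓ) (hℓk : ℓ ≤ k)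
    (c : ℕ → ℝ) (hc : ∀ a ∈ Finset.Icc 1 k, 0 < c a)
    (hcsum : ∑ a ∈ Finset.Icc 1 k, c a < 1)
    (i : ℕ → ℕ) (hi : ∀ a ∈ Finset.Icc 1 ℓ, i a ∈ Finset.Icc 1 N) :
    (∀ j ∈ Finset.Icc 1 N, j ≠ i ℓ →
        c ℓ + wvec N ℓ c i (i ℓ) - wvec N ℓ c i j ≠ 0 ∧
        wvec N ℓ c i (i ℓ) - wvec N ℓ c i j ≠ 0) ∧
    0 < ∏ j ∈ (Finset.Icc 1 N).erase (i ℓ),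
        (c ℓ + wvec N ℓ c i (i ℓ) - wvec N ℓ c i j) /
          (wvec N ℓ c i (i ℓ) - wvec N ℓ c i j) := by
  set s : ℕ → ℝ := fun j => ∑ a ∈ Finset.Ico 1 ℓ, c a * (if i a = j then 1 else 0) with hs
  have hmem : ∀ a ∈ Finset.Ico 1 ℓ, a ∈ Finset.Icc 1 k := by
    intro a ha
    rw [Finset.mem_Ico] at ha
    exact Finset.mem_Icc.mpr ⟨ha.1, le_trans (le_of_lt ha.2) hℓk⟩
  have hs0 : ∀ j, 0 ≤ s j := by
    intro j
    apply Finset.sum_nonneg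
    intro a ha
    have := hc a (hmem a ha)
    positivity
  have hsle : ∀ j, s j ≤ ∑ a ∈ Finset.Ico 1 ℓ, c a := by
    intro j
    apply Finset.sum_le_sum
    intro a ha
    have hca := (hc a (hmem a ha)).le
    split <;> simp <;> linarith
  have hIcc : ∑ a ∈ Finset.Ico 1 ℓ, c a + c ℓ = ∑ a ∈ Finset.Icc 1 ℓ, c a := by
    rw [← Finset.Ico_add_one_right_eq_Icc, Finset.sum_Ico_succ_top hℓ1]
  have hsub : ∑ a ∈ Finset.Icc 1 ℓ, c a ≤ ∑ a ∈ Finset.Icc 1 k, c a := by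
    apply Finset.sum_le_sum_of_subset_of_nonneg
    · exact Finset.Icc_subset_Icc_right hℓk
    · intro a ha _; exact (hc a ha).le
  have hlt1 : ∀ j, s j + c ℓ < 1 := by
    intro j
    have := hsle j
    linarith
  have hcℓ : 0 < c ℓ := hc ℓ (Finset.mem_Icc.mpr ⟨hℓ1, hℓk⟩)
  have hw : ∀ j, wvec N ℓ c i j = ((N : ℝ) - (j : ℝ)) + s j := fun j => rfl
  have key : ∀ j ∈ Finset.Icc 1 N, j ≠ i ℓ →
      (0 < c ℓ + wvec N ℓ c i (i ℓ) - wvec N ℓ c i j ∧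
       0 < wvec N ℓ c i (i ℓ) - wvec N ℓ c i j) ∨
      (c ℓ + wvec N ℓ c i (i ℓ) - wvec N ℓ c i j < 0 ∧
       wvec N ℓ c i (i ℓ) - wvec N ℓ c i j < 0) := by
    intro j hj hne
    have h0iℓ := hs0 (i ℓ)
    have h0j := hs0 j
    have h1iℓ := hlt1 (i ℓ)
    have h1j := hlt1 j
    rw [hw, hw]
    rcases lt_or_gt_of_ne hne with h | h
    · -- j < i ℓ : diff negative
      right
      have : (j : ℝ) ≤ (i ℓ : ℝ) - 1 := by
        have : j + 1 ≤ i ℓ := h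
        have := (Nat.cast_le (α := ℝ)).mpr this
        push_cast at this
        linarith
      constructor <;> linarith
    · -- j > i ℓ : diff positive
      left
      have : (i ℓ : ℝ) + 1 ≤ (j : ℝ) := by
        have : i ℓ + 1 ≤ j := h
        have := (Nat.cast_le (α := ℝ)).mpr this
        push_cast at this
        linarith
      constructor <;> linarith
  constructor
  · intro j hj hne
    rcases key j hj hne with ⟨h1, h2⟩ | ⟨h1, h2⟩
    · exact ⟨ne_of_gt h1, ne_of_gt h2⟩
    · exact ⟨ne_of_lt h1, ne_of_lt h2⟩
  · apply Finset.prod_pos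
    intro j hj
    have hj' := Finset.mem_of_mem_erase hj
    have hne := Finset.ne_of_mem_erase hj
    rcases key j hj' hne with ⟨h1, h2⟩ | ⟨h1, h2⟩
    · exact div_pos h1 h2
    · exact div_pos_of_neg_of_neg h1 h2
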